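/- The Hessian of φ(x;r) = (1/2)(∑ r_i r_{i+1} sin x_i)(n ∑ x_i² − (∑ x_i)²) + n ∑ r_i² − (∑ r_i)² at z_* = (2π/n,...,2π/n; 1,...,1) is the block diagonal matrix with blocks n sin(2π/n)·C and 2C, where C has diagonal entries n−1 and off-diagonal entries −1; in particular the mixed second derivatives D_{r_k x_l}φ(z_*) vanish. -/

import Mathlib

open Real

noncomputable def phi (n : ℕ) [NeZero n] (x r : Fin n → ℝ) : ℝ :=
  (1 / 2) * (∑ i, r i * r (i + 1) * Real.sin (x i))
      * ((n : ℝ) * ∑ i, (x i) ^ 2 - (∑ i, x i) ^ 2)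
    + (n : ℝ) * ∑ i, (r i) ^ 2 - (∑ i, r i) ^ 2


lemma hlin0 (a : ℝ) : HasDerivAt (fun t : ℝ => a + t) 1 0 :=
  (hasDerivAt_id 0).const_add a

lemma hsin0 (a : ℝ) : HasDerivAt (fun t : ℝ => Real.sin (a + t)) (Real.cos a) 0 := by
  simpa using (hlin0 a).sin

lemma hcos0 (a : ℝ) : HasDerivAt (fun t : ℝ => Real.cos (a + t)) (-Real.sin a) 0 := by
  simpa using (hlin0 a).cos

lemma hsq0 (a : ℝ) : HasDerivAt (fun t : ℝ => (a + t) ^ 2) (2 * a) 0 := by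
  simpa using (hlin0 a).fun_pow 2

lemma sum1 {n : ℕ} (l : Fin n) (f : ℝ → ℝ) (a c : ℝ) :
    ∑ i : Fin n, f (c + if i = l then a else 0)
      = (n:ℝ) * f c - f c + f (c + a) := by
  have h : ∀ i : Fin n, f (c + if i = l then a else 0)
      = f c + (if i = l then f (c + a) - f c else 0) := by
    intro i; by_cases h1 : i = l <;> simp [h1]
  rw [Finset.sum_congr rfl fun i _ => h i]
  simp [Finset.sum_add_distrib, Finset.sum_ite_eq', Finset.card_univ, nsmul_eq_mul]
  ring

lemma sum2ne {n : ℕ} {k l : Fin n} (h : k ≠ l) (f : ℝ → ℝ) (a b c : ℝ) :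
    ∑ i : Fin n, f (c + (if i = k then a else 0) + (if i = l then b else 0))
      = (n:ℝ) * f c - 2 * f c + f (c + a) + f (c + b) := by
  have hh : ∀ i : Fin n, f (c + (if i = k then a else 0) + (if i = l then b else 0))
      = f c + ((if i = k then f (c + a) - f c else 0) + (if i = l then f (c + b) - f c else 0)) := by
    intro i
    by_cases h1 : i = k
    · have h2 : ¬ i = l := fun h2 => h (h1.symm.trans h2)
      simp [h1, h2, h, Ne.symm h]
    · by_cases h2 : i = l <;> simp [h1, h2, h, Ne.symm h]
  rw [Finset.sum_congr rfl fun i _ => hh i]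
  simp [Finset.sum_add_distrib, Finset.sum_ite_eq', Finset.card_univ, nsmul_eq_mul]
  ring

lemma sum2eq {n : ℕ} (k : Fin n) (f : ℝ → ℝ) (a b c : ℝ) :
    ∑ i : Fin n, f (c + (if i = k then a else 0) + (if i = k then b else 0))
      = (n:ℝ) * f c - f c + f (c + a + b) := by
  have hh : ∀ i : Fin n, f (c + (if i = k then a else 0) + (if i = k then b else 0))
      = f c + (if i = k then f (c + a + b) - f c else 0) := by
    intro i; by_cases h1 : i = k <;> simp [h1]
  rw [Finset.sum_congr rfl fun i _ => hh i]
  simp [Finset.sum_add_distrib, Finset.sum_ite_eq', Finset.card_univ, nsmul_eq_mul]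
  ring

lemma sum_mul_pert {n : ℕ} (l : Fin n) (g : Fin n → ℝ) (f : ℝ → ℝ) (a c : ℝ) :
    ∑ i : Fin n, g i * f (c + if i = l then a else 0)
      = (∑ i : Fin n, g i) * f c - g l * f c + g l * f (c + a) := by
  have hh : ∀ i : Fin n, g i * f (c + if i = l then a else 0)
      = g i * f c + (if i = l then g i * f (c + a) - g i * f c else 0) := by
    intro i; by_cases h1 : i = l <;> simp [h1]
  rw [Finset.sum_congr rfl fun i _ => hh i]
  simp [Finset.sum_add_distrib, Finset.sum_ite_eq', ← Finset.sum_mul]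
  ring

lemma inner_deriv1 (σ κ μ e B : ℝ) :
    deriv (fun t : ℝ => 1/2 * ((σ + Real.sin (B + t)) * (κ + e * (B + t) ^ 2 - (μ + t) ^ 2))) 0
      = 1/2 * (Real.cos B * (κ + e * B ^ 2 - μ ^ 2) + (σ + Real.sin B) * (e * (2 * B) - 2 * μ)) := by
  have h1 : HasDerivAt (fun t : ℝ => σ + Real.sin (B + t)) (Real.cos B) 0 := (hsin0 B).const_add σ
  have h2 : HasDerivAt (fun t : ℝ => κ + e * (B + t) ^ 2 - (μ + t) ^ 2) (e * (2 * B) - 2 * μ) 0 :=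
    (((hsq0 B).const_mul e).const_add κ).sub (hsq0 μ)
  have h3 := (h1.mul h2).const_mul (1/2 : ℝ)
  refine h3.deriv.trans ?_
  simp only [add_zero, mul_one]

lemma inner_deriv2 (c2 μ e B : ℝ) :
    deriv (fun t : ℝ => e * (c2 + (B + t) ^ 2) - (μ + t) ^ 2) 0 = e * (2 * B) - 2 * μ := by
  have h := (((hsq0 B).const_add c2).const_mul e).sub (hsq0 μ)
  exact h.deriv

lemma inner_deriv3 (G g c2 μ e B c7 : ℝ) :
    deriv (fun t : ℝ => 1/2 * ((G + g * Real.sin (B + t)) * (e * (c2 + (B + t) ^ 2) - (μ + t) ^ 2)) + c7) 0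
      = 1/2 * ((g * Real.cos B) * (e * (c2 + B ^ 2) - μ ^ 2) + (G + g * Real.sin B) * (e * (2 * B) - 2 * μ)) := by
  have h1 : HasDerivAt (fun t : ℝ => G + g * Real.sin (B + t)) (g * Real.cos B) 0 :=
    ((hsin0 B).const_mul g).const_add G
  have h2 : HasDerivAt (fun t : ℝ => e * (c2 + (B + t) ^ 2) - (μ + t) ^ 2) (e * (2 * B) - 2 * μ) 0 :=
    (((hsq0 B).const_add c2).const_mul e).sub (hsq0 μ)
  have h3 := ((h1.mul h2).const_mul (1/2 : ℝ)).add_const c7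
  refine h3.deriv.trans ?_
  simp only [add_zero, mul_one]

lemma outer_deriv1 (c1 c2 c3 c4 c5 c6 e B ν : ℝ) :
    deriv (fun s : ℝ => 1/2 * (c1 * (e * (c2 + (B + s) ^ 2) + c3 - (ν + s) ^ 2)
        + ((c4 + Real.sin (B + s)) + c5) * (c6 - 2 * (ν + s)))) 0
      = 1/2 * (c1 * (e * (2 * B) - 2 * ν)
        + (Real.cos B * (c6 - 2 * ν) + ((c4 + Real.sin B) + c5) * (-2))) := by
  have hV : HasDerivAt (fun s : ℝ => e * (c2 + (B + s) ^ 2) + c3 - (ν + s) ^ 2)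
      (e * (2 * B) - 2 * ν) 0 :=
    ((((hsq0 B).const_add c2).const_mul e).add_const c3).sub (hsq0 ν)
  have hW : HasDerivAt (fun s : ℝ => (c4 + Real.sin (B + s)) + c5) (Real.cos B) 0 :=
    ((hsin0 B).const_add c4).add_const c5
  have hZ : HasDerivAt (fun s : ℝ => c6 - 2 * (ν + s)) (-(2 * 1)) 0 :=
    ((hlin0 ν).const_mul 2).const_sub c6
  have h3 := ((hV.const_mul c1).add (hW.mul hZ)).const_mul (1/2 : ℝ)
  refine h3.deriv.trans ?_
  simp only [add_zero, mul_one]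

lemma outer_deriv2 (c3 c4 e B ν : ℝ) :
    deriv (fun s : ℝ => 1/2 * (Real.cos (B + s) * (c3 + e * (B + s) ^ 2 - (ν + s) ^ 2)
        + (c4 + Real.sin (B + s)) * (e * (2 * (B + s)) - 2 * (ν + s)))) 0
      = 1/2 * (-Real.sin B * (c3 + e * B ^ 2 - ν ^ 2) + Real.cos B * (e * (2 * B) - 2 * ν)
        + (Real.cos B * (e * (2 * B) - 2 * ν) + (c4 + Real.sin B) * (e * 2 - 2))) := by
  have hU : HasDerivAt (fun s : ℝ => Real.cos (B + s)) (-Real.sin B) 0 := hcos0 B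
  have hV : HasDerivAt (fun s : ℝ => c3 + e * (B + s) ^ 2 - (ν + s) ^ 2)
      (e * (2 * B) - 2 * ν) 0 :=
    (((hsq0 B).const_mul e).const_add c3).sub (hsq0 ν)
  have hW : HasDerivAt (fun s : ℝ => c4 + Real.sin (B + s)) (Real.cos B) 0 :=
    (hsin0 B).const_add c4
  have hZ : HasDerivAt (fun s : ℝ => e * (2 * (B + s)) - 2 * (ν + s)) (e * (2 * 1) - 2 * 1) 0 :=
    (((hlin0 B).const_mul 2).const_mul e).sub ((hlin0 ν).const_mul 2)
  have h3 := ((hU.mul hV).add (hW.mul hZ)).const_mul (1/2 : ℝ)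
  refine h3.deriv.trans ?_
  simp only [add_zero, mul_one]

lemma outer_lin (c ν : ℝ) : deriv (fun s : ℝ => c - 2 * (ν + s)) 0 = -2 := by
  have h := ((hlin0 ν).const_mul 2).const_sub c
  refine h.deriv.trans ?_
  norm_num

lemma outer_lin2 (e B ν : ℝ) :
    deriv (fun s : ℝ => e * (2 * (B + s)) - 2 * (ν + s)) 0 = e * 2 - 2 := by
  have h := (((hlin0 B).const_mul 2).const_mul e).sub ((hlin0 ν).const_mul 2)
  refine h.deriv.trans ?_
  norm_num


/-- The Hessian of φ at z_* = (2π/n,…,2π/n; 1,…,1) is block diagonal with blocks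
n sin(2π/n)·C and 2C, where C has diagonal n−1 and off-diagonal −1; in particular
the mixed second derivatives vanish. -/
theorem hessian_phi (n : ℕ) [NeZero n] (hn : 3 ≤ n) :
    (∀ k l : Fin n,
      deriv (fun s : ℝ => deriv (fun t : ℝ =>
          phi n (fun i => 2 * π / n + (if i = k then s else 0) + (if i = l then t else 0))
            (fun _ => 1)) 0) 0
        = n * Real.sin (2 * π / n) * (if k = l then (n : ℝ) - 1 else -1)) ∧
    (∀ k l : Fin n,
      deriv (fun s : ℝ => deriv (fun t : ℝ =>
          phi n (fun _ => 2 * π / n)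
            (fun i => 1 + (if i = k then s else 0) + (if i = l then t else 0))) 0) 0
        = 2 * (if k = l then (n : ℝ) - 1 else -1)) ∧
    (∀ k l : Fin n,
      deriv (fun s : ℝ => deriv (fun t : ℝ =>
          phi n (fun i => 2 * π / n + if i = l then t else 0)
            (fun i => 1 + if i = k then s else 0)) 0) 0
        = 0) := by
  refine ⟨?_, ?_, ?_⟩
  · -- Part 1 : x-block
    intro k l
    rcases eq_or_ne k l with h | h
    · subst h
      rw [if_pos rfl]
      have hF : ∀ s t : ℝ,
          phi n (fun i => 2 * π / n + (if i = k then s else 0) + (if i = k then t else 0))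
            (fun _ => 1)
          = 1/2 * (((n:ℝ) * Real.sin (2 * π / (n:ℝ)) - Real.sin (2 * π / (n:ℝ))
                + Real.sin (2 * π / (n:ℝ) + s + t))
              * ((n:ℝ) * ((n:ℝ) * (2 * π / (n:ℝ)) ^ 2 - (2 * π / (n:ℝ)) ^ 2)
                + (n:ℝ) * (2 * π / (n:ℝ) + s + t) ^ 2
                - ((n:ℝ) * (2 * π / (n:ℝ)) + s + t) ^ 2)) := by
        intro s t
        have e1 : ∑ i : Fin n, Real.sin (2 * π / (n:ℝ) + (if i = k then s else 0) + (if i = k then t else 0))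
            = (n:ℝ) * Real.sin (2 * π / (n:ℝ)) - Real.sin (2 * π / (n:ℝ)) + Real.sin (2 * π / (n:ℝ) + s + t) :=
          sum2eq k Real.sin s t (2 * π / (n:ℝ))
        have e2 : ∑ i : Fin n, (2 * π / (n:ℝ) + (if i = k then s else 0) + (if i = k then t else 0)) ^ 2
            = (n:ℝ) * (2 * π / (n:ℝ)) ^ 2 - (2 * π / (n:ℝ)) ^ 2 + (2 * π / (n:ℝ) + s + t) ^ 2 :=
          sum2eq k (fun y => y ^ 2) s t (2 * π / (n:ℝ))
        have e3 : ∑ i : Fin n, (2 * π / (n:ℝ) + (if i = k then s else 0) + (if i = k then t else 0))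
            = (n:ℝ) * (2 * π / (n:ℝ)) - (2 * π / (n:ℝ)) + (2 * π / (n:ℝ) + s + t) :=
          sum2eq k (fun y => y) s t (2 * π / (n:ℝ))
        simp only [phi, one_mul, one_pow, e1, e2, e3, Finset.sum_const, Finset.card_univ,
          Fintype.card_fin, nsmul_eq_mul, mul_one]
        ring
      have key : (fun s : ℝ => deriv (fun t : ℝ =>
          phi n (fun i => 2 * π / n + (if i = k then s else 0) + (if i = k then t else 0))
            (fun _ => 1)) 0)
          = fun s : ℝ => 1/2 * (Real.cos (2 * π / (n:ℝ) + s)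
              * ((n:ℝ) * ((n:ℝ) * (2 * π / (n:ℝ)) ^ 2 - (2 * π / (n:ℝ)) ^ 2)
                  + (n:ℝ) * (2 * π / (n:ℝ) + s) ^ 2 - ((n:ℝ) * (2 * π / (n:ℝ)) + s) ^ 2)
              + (((n:ℝ) * Real.sin (2 * π / (n:ℝ)) - Real.sin (2 * π / (n:ℝ)))
                  + Real.sin (2 * π / (n:ℝ) + s))
                * ((n:ℝ) * (2 * (2 * π / (n:ℝ) + s)) - 2 * ((n:ℝ) * (2 * π / (n:ℝ)) + s))) := by
        funext s
        rw [funext (hF s), inner_deriv1]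
      rw [key, outer_deriv2]
      ring
    · rw [if_neg h]
      have hF : ∀ s t : ℝ,
          phi n (fun i => 2 * π / n + (if i = k then s else 0) + (if i = l then t else 0))
            (fun _ => 1)
          = 1/2 * (((n:ℝ) * Real.sin (2 * π / (n:ℝ)) - 2 * Real.sin (2 * π / (n:ℝ))
                + Real.sin (2 * π / (n:ℝ) + s) + Real.sin (2 * π / (n:ℝ) + t))
              * ((n:ℝ) * ((n:ℝ) * (2 * π / (n:ℝ)) ^ 2 - 2 * (2 * π / (n:ℝ)) ^ 2
                    + (2 * π / (n:ℝ) + s) ^ 2)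
                + (n:ℝ) * (2 * π / (n:ℝ) + t) ^ 2
                - ((n:ℝ) * (2 * π / (n:ℝ)) + s + t) ^ 2)) := by
        intro s t
        have e1 : ∑ i : Fin n, Real.sin (2 * π / (n:ℝ) + (if i = k then s else 0) + (if i = l then t else 0))
            = (n:ℝ) * Real.sin (2 * π / (n:ℝ)) - 2 * Real.sin (2 * π / (n:ℝ))
              + Real.sin (2 * π / (n:ℝ) + s) + Real.sin (2 * π / (n:ℝ) + t) :=
          sum2ne h Real.sin s t (2 * π / (n:ℝ))
        have e2 : ∑ i : Fin n, (2 * π / (n:ℝ) + (if i = k then s else 0) + (if i = l then t else 0)) ^ 2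
            = (n:ℝ) * (2 * π / (n:ℝ)) ^ 2 - 2 * (2 * π / (n:ℝ)) ^ 2
              + (2 * π / (n:ℝ) + s) ^ 2 + (2 * π / (n:ℝ) + t) ^ 2 :=
          sum2ne h (fun y => y ^ 2) s t (2 * π / (n:ℝ))
        have e3 : ∑ i : Fin n, (2 * π / (n:ℝ) + (if i = k then s else 0) + (if i = l then t else 0))
            = (n:ℝ) * (2 * π / (n:ℝ)) - 2 * (2 * π / (n:ℝ))
              + (2 * π / (n:ℝ) + s) + (2 * π / (n:ℝ) + t) :=
          sum2ne h (fun y => y) s t (2 * π / (n:ℝ))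
        simp only [phi, one_mul, one_pow, e1, e2, e3, Finset.sum_const, Finset.card_univ,
          Fintype.card_fin, nsmul_eq_mul, mul_one]
        ring
      have key : (fun s : ℝ => deriv (fun t : ℝ =>
          phi n (fun i => 2 * π / n + (if i = k then s else 0) + (if i = l then t else 0))
            (fun _ => 1)) 0)
          = fun s : ℝ => 1/2 * (Real.cos (2 * π / (n:ℝ))
              * ((n:ℝ) * ((n:ℝ) * (2 * π / (n:ℝ)) ^ 2 - 2 * (2 * π / (n:ℝ)) ^ 2
                    + (2 * π / (n:ℝ) + s) ^ 2)
                  + (n:ℝ) * (2 * π / (n:ℝ)) ^ 2 - ((n:ℝ) * (2 * π / (n:ℝ)) + s) ^ 2)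
              + (((n:ℝ) * Real.sin (2 * π / (n:ℝ)) - 2 * Real.sin (2 * π / (n:ℝ))
                    + Real.sin (2 * π / (n:ℝ) + s)) + Real.sin (2 * π / (n:ℝ)))
                * ((n:ℝ) * (2 * (2 * π / (n:ℝ))) - 2 * ((n:ℝ) * (2 * π / (n:ℝ)) + s))) := by
        funext s
        rw [funext (hF s), inner_deriv1]
      rw [key, outer_deriv1]
      ring
  · -- Part 2 : r-block
    intro k l
    rcases eq_or_ne k l with h | h
    · subst h
      rw [if_pos rfl]
      have hF : ∀ s t : ℝ,
          phi n (fun _ => 2 * π / n)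
            (fun i => 1 + (if i = k then s else 0) + (if i = k then t else 0))
          = (n:ℝ) * (((n:ℝ) * (1:ℝ) ^ 2 - (1:ℝ) ^ 2) + ((1:ℝ) + s + t) ^ 2)
              - ((n:ℝ) + s + t) ^ 2 := by
        intro s t
        have e2 : ∑ i : Fin n, ((1:ℝ) + (if i = k then s else 0) + (if i = k then t else 0)) ^ 2
            = (n:ℝ) * (1:ℝ) ^ 2 - (1:ℝ) ^ 2 + ((1:ℝ) + s + t) ^ 2 :=
          sum2eq k (fun y => y ^ 2) s t 1
        have e3 : ∑ i : Fin n, ((1:ℝ) + (if i = k then s else 0) + (if i = k then t else 0))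
            = (n:ℝ) * (1:ℝ) - (1:ℝ) + ((1:ℝ) + s + t) :=
          sum2eq k (fun y => y) s t 1
        simp only [phi, e2, e3, Finset.sum_const, Finset.card_univ, Fintype.card_fin,
          nsmul_eq_mul, mul_one]
        ring
      have key : (fun s : ℝ => deriv (fun t : ℝ =>
          phi n (fun _ => 2 * π / n)
            (fun i => 1 + (if i = k then s else 0) + (if i = k then t else 0))) 0)
          = fun s : ℝ => (n:ℝ) * (2 * ((1:ℝ) + s)) - 2 * ((n:ℝ) + s) := by
        funext s
        rw [funext (hF s), inner_deriv2]
      rw [key, outer_lin2]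
      ring
    · rw [if_neg h]
      have hF : ∀ s t : ℝ,
          phi n (fun _ => 2 * π / n)
            (fun i => 1 + (if i = k then s else 0) + (if i = l then t else 0))
          = (n:ℝ) * (((n:ℝ) * (1:ℝ) ^ 2 - 2 * (1:ℝ) ^ 2 + ((1:ℝ) + s) ^ 2) + ((1:ℝ) + t) ^ 2)
              - ((n:ℝ) + s + t) ^ 2 := by
        intro s t
        have e2 : ∑ i : Fin n, ((1:ℝ) + (if i = k then s else 0) + (if i = l then t else 0)) ^ 2
            = (n:ℝ) * (1:ℝ) ^ 2 - 2 * (1:ℝ) ^ 2 + ((1:ℝ) + s) ^ 2 + ((1:ℝ) + t) ^ 2 :=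
          sum2ne h (fun y => y ^ 2) s t 1
        have e3 : ∑ i : Fin n, ((1:ℝ) + (if i = k then s else 0) + (if i = l then t else 0))
            = (n:ℝ) * (1:ℝ) - 2 * (1:ℝ) + ((1:ℝ) + s) + ((1:ℝ) + t) :=
          sum2ne h (fun y => y) s t 1
        simp only [phi, e2, e3, Finset.sum_const, Finset.card_univ, Fintype.card_fin,
          nsmul_eq_mul, mul_one]
        ring
      have key : (fun s : ℝ => deriv (fun t : ℝ =>
          phi n (fun _ => 2 * π / n)
            (fun i => 1 + (if i = k then s else 0) + (if i = l then t else 0))) 0)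
          = fun s : ℝ => (n:ℝ) * (2 * (1:ℝ)) - 2 * ((n:ℝ) + s) := by
        funext s
        rw [funext (hF s), inner_deriv2]
      rw [key, outer_lin]
      norm_num
  · -- Part 3 : mixed block
    intro k l
    have hF : ∀ s t : ℝ,
        phi n (fun i => 2 * π / n + if i = l then t else 0)
          (fun i => 1 + if i = k then s else 0)
        = 1/2 * ((((∑ i : Fin n, (1 + if i = k then s else 0) * (1 + if i + 1 = k then s else 0))
                  * Real.sin (2 * π / (n:ℝ))
                - (1 + if l = k then s else 0) * (1 + if l + 1 = k then s else 0)
                  * Real.sin (2 * π / (n:ℝ)))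
              + (1 + if l = k then s else 0) * (1 + if l + 1 = k then s else 0)
                  * Real.sin (2 * π / (n:ℝ) + t))
            * ((n:ℝ) * (((n:ℝ) * (2 * π / (n:ℝ)) ^ 2 - (2 * π / (n:ℝ)) ^ 2)
                  + (2 * π / (n:ℝ) + t) ^ 2)
              - ((n:ℝ) * (2 * π / (n:ℝ)) + t) ^ 2))
          + ((n:ℝ) * (∑ i : Fin n, ((1:ℝ) + if i = k then s else 0) ^ 2)
              - (∑ i : Fin n, ((1:ℝ) + if i = k then s else 0)) ^ 2) := by
      intro s t
      have es : ∑ i : Fin n, (1 + if i = k then s else 0) * (1 + if i + 1 = k then s else 0)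
            * Real.sin (2 * π / (n:ℝ) + if i = l then t else 0)
          = (∑ i : Fin n, (1 + if i = k then s else 0) * (1 + if i + 1 = k then s else 0))
              * Real.sin (2 * π / (n:ℝ))
            - (1 + if l = k then s else 0) * (1 + if l + 1 = k then s else 0)
              * Real.sin (2 * π / (n:ℝ))
            + (1 + if l = k then s else 0) * (1 + if l + 1 = k then s else 0)
              * Real.sin (2 * π / (n:ℝ) + t) :=
        sum_mul_pert l (fun i => (1 + if i = k then s else 0) * (1 + if i + 1 = k then s else 0))
          Real.sin t (2 * π / (n:ℝ))
      have e2 : ∑ i : Fin n, (2 * π / (n:ℝ) + if i = l then t else 0) ^ 2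
          = (n:ℝ) * (2 * π / (n:ℝ)) ^ 2 - (2 * π / (n:ℝ)) ^ 2 + (2 * π / (n:ℝ) + t) ^ 2 :=
        sum1 l (fun y => y ^ 2) t (2 * π / (n:ℝ))
      have e3 : ∑ i : Fin n, (2 * π / (n:ℝ) + if i = l then t else 0)
          = (n:ℝ) * (2 * π / (n:ℝ)) - (2 * π / (n:ℝ)) + (2 * π / (n:ℝ) + t) :=
        sum1 l (fun y => y) t (2 * π / (n:ℝ))
      simp only [phi, es, e2, e3]
      ring
    have key : (fun s : ℝ => deriv (fun t : ℝ =>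
        phi n (fun i => 2 * π / n + if i = l then t else 0)
          (fun i => 1 + if i = k then s else 0)) 0)
        = fun _ : ℝ => (0:ℝ) := by
      funext s
      rw [funext (hF s), inner_deriv3]
      ring
    rw [key]
    simp
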